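/- Let f_Z denote the density of the n-dimensional Gaussian N(0, σ²·I_n). For any measurable set D ⊆ ℝⁿ and any two points u₁, u₂ ∈ ℝⁿ with ‖u₁ − u₂‖₂ = d, the quantity ∫_D (f_Z(y − u₁) − f_Z(y − u₂)) dy is strictly less than Φ(d/(2σ)), where Φ is the standard normal CDF. -/

import Mathlib

open MeasureTheory ProbabilityTheory Real

section Aux

variable {n : ℕ} {σ d : ℝ}

/-- σ² as an NNReal. -/
noncomputable def sigSq (σ : ℝ) : NNReal := ⟨σ ^ 2, sq_nonneg σ⟩

lemma sigSq_ne_zero (hσ : 0 < σ) : sigSq σ ≠ 0 := by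
  intro h
  have : (sigSq σ : ℝ) = 0 := by rw [h]; simp
  change σ ^ 2 = 0 at this
  nlinarith

lemma gaussianPDFReal_even (v : NNReal) (x : ℝ) :
    gaussianPDFReal 0 v (-x) = gaussianPDFReal 0 v x := by
  simp [gaussianPDFReal, neg_sq]

/-- Φ(x) > 0. -/
lemma phi_pos (x : ℝ) : 0 < (gaussianReal 0 1 (Set.Iic x)).toReal := by
  rw [gaussianReal_apply_eq_integral _ one_ne_zero,
    ENNReal.toReal_ofReal (integral_nonneg (gaussianPDFReal_nonneg 0 1))]
  rw [setIntegral_pos_iff_support_of_nonneg_ae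
    (ae_of_all _ (gaussianPDFReal_nonneg 0 1))
    ((integrable_gaussianPDFReal 0 1).restrict)]
  have hsupp : Function.support (gaussianPDFReal 0 1) = Set.univ := by
    ext t; simp [Function.mem_support, (gaussianPDFReal_pos 0 1 t one_ne_zero).ne']
  rw [hsupp, Set.univ_inter]
  simp [Real.volume_Iic]

/-- Scaling: the 1-D target computation. -/
lemma phi_eq (hσ : 0 < σ) (d : ℝ) :
    (gaussianReal 0 1 (Set.Iic (d / (2 * σ)))).toReal
      = ∫ t in Set.Iic (d / 2), gaussianPDFReal 0 (sigSq σ) t := by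
  have hmap : (gaussianReal 0 1).map (σ * ·) = gaussianReal 0 (sigSq σ) := by
    rw [gaussianReal_map_const_mul σ]
    congr 1
    · ring
    · ext : 1
      simp [sigSq]
      rfl
  have hmeas : (gaussianReal 0 (sigSq σ)) (Set.Iic (d / 2))
      = gaussianReal 0 1 (Set.Iic (d / (2 * σ))) := by
    rw [← hmap, Measure.map_apply (by fun_prop) measurableSet_Iic]
    congr 1
    ext x
    simp only [Set.mem_preimage, Set.mem_Iic]
    have h2σ : (0:ℝ) < 2 * σ := by linarith
    constructor
    · intro h; rw [le_div_iff₀ h2σ]; linarith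
    · intro h; have := (le_div_iff₀ h2σ).mp h; linarith
  rw [← hmeas, gaussianReal_apply_eq_integral _ (sigSq_ne_zero hσ),
    ENNReal.toReal_ofReal (integral_nonneg (gaussianPDFReal_nonneg _ _))]

lemma half_int (hσ : 0 < σ) (d : ℝ) :
    ∫ t in Set.Ici (-(d / 2)), gaussianPDFReal 0 (sigSq σ) t
      = (gaussianReal 0 1 (Set.Iic (d / (2 * σ)))).toReal := by
  rw [phi_eq hσ, integral_Ici_eq_integral_Ioi]
  have : ∀ t, gaussianPDFReal 0 (sigSq σ) t = gaussianPDFReal 0 (sigSq σ) (-t) := by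
    intro t; rw [gaussianPDFReal_even]
  calc ∫ t in Set.Ioi (-(d/2)), gaussianPDFReal 0 (sigSq σ) t
      = ∫ t in Set.Ioi (-(d/2)), gaussianPDFReal 0 (sigSq σ) (-t) := by
        exact setIntegral_congr_fun measurableSet_Ioi (fun t _ => this t)
    _ = ∫ t in Set.Iic (d/2), gaussianPDFReal 0 (sigSq σ) t := by
        rw [integral_comp_neg_Ioi]; norm_num

end Aux

section NDim

variable {n : ℕ} {σ : ℝ}

lemma gprod (hσ : 0 < σ) (z : EuclideanSpace ℝ (Fin n)) :
    (2 * π * σ ^ 2) ^ (-(n : ℝ) / 2) * rexp (-‖z‖ ^ 2 / (2 * σ ^ 2))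
      = ∏ i, gaussianPDFReal 0 (sigSq σ) (z i) := by
  have ha : (0:ℝ) < 2 * π * σ ^ 2 := by positivity
  have h1 : (sigSq σ : ℝ) = σ ^ 2 := rfl
  have hc : (2 * π * σ ^ 2) ^ (-(n : ℝ) / 2)
      = ((√(2 * π * (sigSq σ : ℝ)))⁻¹) ^ n := by
    have h2 : (√(2 * π * (sigSq σ : ℝ)))⁻¹ = (2 * π * σ ^ 2) ^ (-(1:ℝ)/2) := by
      rw [h1, show (-(1:ℝ)/2) = -(1/2 : ℝ) by norm_num, Real.rpow_neg ha.le,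
        Real.sqrt_eq_rpow]
    rw [h2, ← Real.rpow_natCast ((2 * π * σ ^ 2) ^ (-(1:ℝ)/2)) n,
      ← Real.rpow_mul ha.le]
    congr 1
    ring
  have hnorm : ‖z‖ ^ 2 = ∑ i, (z i) ^ 2 := by
    rw [EuclideanSpace.norm_eq, Real.sq_sqrt (by positivity)]
    simp [Real.norm_eq_abs, sq_abs]
  have hexp : rexp (-‖z‖ ^ 2 / (2 * σ ^ 2))
      = ∏ i, rexp (-(z i - 0) ^ 2 / (2 * (sigSq σ : ℝ))) := by
    rw [← Real.exp_sum]
    congr 1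
    rw [hnorm, h1]
    simp only [sub_zero]
    rw [neg_div, Finset.sum_div, ← Finset.sum_neg_distrib]
    exact Finset.sum_congr rfl (fun i _ => by ring)
  rw [hc, hexp, gaussianPDFReal_def]
  simp only []
  rw [Finset.prod_mul_distrib, Finset.prod_const, Finset.card_univ, Fintype.card_fin]

lemma integrable_prod_g (hσ : 0 < σ) :
    Integrable (fun x : Fin n → ℝ => ∏ i, gaussianPDFReal 0 (sigSq σ) (x i)) :=
  Integrable.fintype_prod (fun _ => integrable_gaussianPDFReal _ _)

lemma integrable_fZE (hσ : 0 < σ) :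
    Integrable (fun z : EuclideanSpace ℝ (Fin n) => ∏ i, gaussianPDFReal 0 (sigSq σ) (z i)) := by
  have h := (EuclideanSpace.volume_preserving_symm_measurableEquiv_toLp (Fin n)).integrable_comp_emb
    (MeasurableEquiv.toLp 2 (Fin n → ℝ)).symm.measurableEmbedding
    (g := fun x : Fin n → ℝ => ∏ i, gaussianPDFReal 0 (sigSq σ) (x i))
  exact h.mpr (integrable_prod_g hσ)

lemma halfspace_int (hσ : 0 < σ) (i₀ : Fin n) (a : ℝ) :
    ∫ w : EuclideanSpace ℝ (Fin n),
        (Set.Ici a).indicator (fun _ => (1:ℝ)) (w i₀) * ∏ i, gaussianPDFReal 0 (sigSq σ) (w i)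
      = ∫ t in Set.Ici a, gaussianPDFReal 0 (sigSq σ) t := by
  set g := gaussianPDFReal 0 (sigSq σ) with hg
  have step1 : ∫ w : EuclideanSpace ℝ (Fin n),
        (Set.Ici a).indicator (fun _ => (1:ℝ)) (w i₀) * ∏ i, g (w i)
      = ∫ x : Fin n → ℝ, (Set.Ici a).indicator (fun _ => (1:ℝ)) (x i₀) * ∏ i, g (x i) :=
    (EuclideanSpace.volume_preserving_symm_measurableEquiv_toLp (Fin n)).integral_comp'
      (fun x => (Set.Ici a).indicator (fun _ => (1:ℝ)) (x i₀) * ∏ i, g (x i))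
  rw [step1]
  have step2 : ∀ x : Fin n → ℝ,
      (Set.Ici a).indicator (fun _ => (1:ℝ)) (x i₀) * ∏ i, g (x i)
        = ∏ i, (fun t => (if i = i₀ then (Set.Ici a).indicator (fun _ => (1:ℝ)) t else 1) * g t) (x i) := by
    intro x
    rw [Finset.prod_mul_distrib, Finset.prod_ite_eq' Finset.univ i₀
      (fun _ => (Set.Ici a).indicator (fun _ => (1:ℝ)) (x _))]
    simp
  simp_rw [step2]
  rw [MeasureTheory.integral_fintype_prod_volume_eq_prod
    (f := fun i t => (if i = i₀ then (Set.Ici a).indicator (fun _ => (1:ℝ)) t else 1) * g t)]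
  have hval : ∀ i : Fin n, (∫ t, (if i = i₀ then (Set.Ici a).indicator (fun _ => (1:ℝ)) t else 1) * g t)
      = if i = i₀ then ∫ t in Set.Ici a, g t else 1 := by
    intro i
    by_cases h : i = i₀ <;> simp only [h, if_true, if_false, one_mul]
    · have : ∀ t, (Set.Ici a).indicator (fun _ => (1:ℝ)) t * g t = (Set.Ici a).indicator g t := by
        intro t
        by_cases ht : t ∈ Set.Ici a <;> simp [ht]
      simp_rw [this]
      exact integral_indicator measurableSet_Ici
    · exact integral_gaussianPDFReal_eq_one 0 (sigSq_ne_zero hσ)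
  simp_rw [hval]
  rw [Finset.prod_ite_eq' Finset.univ i₀ (fun _ => ∫ t in Set.Ici a, g t)]
  simp

end NDim

open scoped RealInnerProductSpace

theorem stmt_2 (n : ℕ) (σ d : ℝ) (hσ : 0 < σ)
    (D : Set (EuclideanSpace ℝ (Fin n))) (hD : MeasurableSet D)
    (u₁ u₂ : EuclideanSpace ℝ (Fin n)) (hd : ‖u₁ - u₂‖ = d)
    (fZ : EuclideanSpace ℝ (Fin n) → ℝ)
    (hfZ : ∀ z, fZ z = (2 * Real.pi * σ ^ 2) ^ (-(n : ℝ) / 2)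
      * Real.exp (-‖z‖ ^ 2 / (2 * σ ^ 2))) :
    (∫ y in D, (fZ (y - u₁) - fZ (y - u₂)))
      < (gaussianReal 0 1 (Set.Iic (d / (2 * σ)))).toReal := by
  have hd0 : 0 ≤ d := hd ▸ norm_nonneg _
  rcases eq_or_lt_of_le hd0 with hd0' | hdpos
  · -- degenerate case d = 0
    have hu : u₁ = u₂ := by
      have : ‖u₁ - u₂‖ = 0 := by rw [hd, ← hd0']
      rwa [norm_eq_zero, sub_eq_zero] at this
    subst hu
    simp only [sub_self, integral_zero]
    exact phi_pos _
  -- main case d > 0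
  set g := gaussianPDFReal 0 (sigSq σ) with hgdef
  have hfZ_pos : ∀ z, 0 < fZ z := by
    intro z; rw [hfZ]; positivity
  have hfZ_prod : ∀ z : EuclideanSpace ℝ (Fin n), fZ z = ∏ i, g (z i) :=
    fun z => (hfZ z).trans (gprod hσ z)
  have hfZ_int : Integrable fZ := by
    have h : fZ = fun z => ∏ i, g (z i) := funext hfZ_prod
    rw [h]; exact integrable_fZE hσ
  have hf1_int : Integrable (fun y => fZ (y - u₁)) := hfZ_int.comp_sub_right u₁
  have hf2_int : Integrable (fun y => fZ (y - u₂)) := hfZ_int.comp_sub_right u₂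
  have hfZ_cont : Continuous fZ := by
    have h : fZ = fun z => (2 * Real.pi * σ ^ 2) ^ (-(n : ℝ) / 2)
        * Real.exp (-‖z‖ ^ 2 / (2 * σ ^ 2)) := funext hfZ
    rw [h]; fun_prop
  set H : Set (EuclideanSpace ℝ (Fin n)) := {y | fZ (y - u₂) ≤ fZ (y - u₁)} with hHdef
  have hHmeas : MeasurableSet H :=
    measurableSet_le (by fun_prop) (by fun_prop)
  -- Step 1: reduce to integral over H
  have hle : (∫ y in D, (fZ (y - u₁) - fZ (y - u₂)))
      ≤ ∫ y in H, (fZ (y - u₁) - fZ (y - u₂)) := by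
    have hmono : ∀ y, fZ (y - u₁) - fZ (y - u₂)
        ≤ H.indicator (fun y => fZ (y - u₁) - fZ (y - u₂)) y := by
      intro y
      by_cases hy : y ∈ H
      · rw [Set.indicator_of_mem hy]
      · rw [Set.indicator_of_notMem hy]
        have : fZ (y - u₁) < fZ (y - u₂) := lt_of_not_ge hy
        linarith
    have hind_int : Integrable (H.indicator fun y => fZ (y - u₁) - fZ (y - u₂)) :=
      (hf1_int.sub hf2_int).indicator hHmeas
    calc (∫ y in D, (fZ (y - u₁) - fZ (y - u₂)))
        ≤ ∫ y in D, H.indicator (fun y => fZ (y - u₁) - fZ (y - u₂)) y :=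
          setIntegral_mono (hf1_int.sub hf2_int).integrableOn hind_int.integrableOn hmono
      _ ≤ ∫ y, H.indicator (fun y => fZ (y - u₁) - fZ (y - u₂)) y := by
          refine setIntegral_le_integral hind_int (ae_of_all _ ?_)
          intro y
          by_cases hy : y ∈ H
          · rw [Set.indicator_of_mem hy]
            exact sub_nonneg.2 hy
          · exact le_of_eq (Set.indicator_of_notMem hy _).symm
      _ = ∫ y in H, (fZ (y - u₁) - fZ (y - u₂)) := integral_indicator hHmeas
  -- Step 2: positivity of the subtracted term
  have hne : u₁ ≠ u₂ := by
    intro h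
    rw [h, sub_self, norm_zero] at hd
    exact hdpos.ne hd
  have hball : Metric.ball u₁ (d / 2) ⊆ H := by
    intro y hy
    rw [Metric.mem_ball, dist_eq_norm] at hy
    have h1 : ‖y - u₁‖ < d / 2 := hy
    have h2 : d / 2 ≤ ‖y - u₂‖ := by
      have := norm_sub_norm_le (u₁ - u₂) (u₁ - y)
      have h3 : u₁ - u₂ - (u₁ - y) = y - u₂ := by abel
      rw [h3, hd] at this
      have h4 : ‖u₁ - y‖ = ‖y - u₁‖ := norm_sub_rev _ _
      linarith [h4 ▸ this]
    show fZ (y - u₂) ≤ fZ (y - u₁)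
    rw [hfZ, hfZ]
    have hc : (0:ℝ) < (2 * Real.pi * σ ^ 2) ^ (-(n : ℝ) / 2) := by positivity
    refine mul_le_mul_of_nonneg_left ?_ hc.le
    apply Real.exp_le_exp.2
    have h5 : ‖y - u₁‖ ^ 2 ≤ ‖y - u₂‖ ^ 2 := by nlinarith [norm_nonneg (y - u₁)]
    have h6 : (0:ℝ) < 2 * σ ^ 2 := by positivity
    exact (div_le_div_iff_of_pos_right h6).mpr (by nlinarith)
  have hHpos : 0 < volume H :=
    lt_of_lt_of_le (Metric.measure_ball_pos volume u₁ (by positivity)) (measure_mono hball)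
  have hf2pos : 0 < ∫ y in H, fZ (y - u₂) := by
    rw [setIntegral_pos_iff_support_of_nonneg_ae
      (ae_of_all _ (fun y => (hfZ_pos (y - u₂)).le)) hf2_int.integrableOn]
    have hsupp : Function.support (fun y => fZ (y - u₂)) = Set.univ := by
      ext y; simp [Function.mem_support, (hfZ_pos (y - u₂)).ne']
    rw [hsupp, Set.univ_inter]
    exact hHpos
  have hsub : ∫ y in H, (fZ (y - u₁) - fZ (y - u₂))
      = (∫ y in H, fZ (y - u₁)) - ∫ y in H, fZ (y - u₂) :=
    integral_sub hf1_int.integrableOn hf2_int.integrableOn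
  -- Step 3: the key computation ∫_H f₁ = Φ(d/(2σ))
  have hn : n ≠ 0 := by
    rintro rfl
    exact hne (Subsingleton.elim _ _)
  set i₀ : Fin n := ⟨0, Nat.pos_of_ne_zero hn⟩ with hi₀
  set e : EuclideanSpace ℝ (Fin n) := (d⁻¹ : ℝ) • (u₁ - u₂) with hedef
  have hew : u₁ - u₂ = d • e := by
    rw [hedef, smul_smul, mul_inv_cancel₀ hdpos.ne', one_smul]
  have hnorm_e : ‖e‖ = 1 := by
    rw [hedef, norm_smul, hd, Real.norm_eq_abs, abs_inv,
      abs_of_pos hdpos, inv_mul_cancel₀ hdpos.ne']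
  obtain ⟨b, hb⟩ : ∃ b : OrthonormalBasis (Fin n) ℝ (EuclideanSpace ℝ (Fin n)), b i₀ = e := by
    have hcard : Module.finrank ℝ (EuclideanSpace ℝ (Fin n)) = Fintype.card (Fin n) := by
      simp [finrank_euclideanSpace]
    have horth : Orthonormal ℝ (({i₀} : Set (Fin n)).restrict (fun _ : Fin n => e)) := by
      constructor
      · intro i; exact hnorm_e
      · intro i j hij
        exact absurd (Subtype.ext ((i.2 : i.1 ∈ ({i₀} : Set (Fin n))).trans
          ((j.2 : j.1 ∈ ({i₀} : Set (Fin n)))).symm)) hij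
    obtain ⟨b, hb⟩ := horth.exists_orthonormalBasis_extension_of_card_eq hcard
    exact ⟨b, hb i₀ rfl⟩
  have hkey : ∫ y in H, fZ (y - u₁)
      = (gaussianReal 0 1 (Set.Iic (d / (2 * σ)))).toReal := by
    rw [← integral_indicator hHmeas]
    rw [← integral_add_right_eq_self (H.indicator fun y => fZ (y - u₁)) u₁]
    have hpt : ∀ z, H.indicator (fun y => fZ (y - u₁)) (z + u₁)
        = (Set.Ici (-(d/2))).indicator (fun _ => (1:ℝ)) (b.repr z i₀)
          * ∏ i, g (b.repr z i) := by
      intro z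
      have hinner : ⟪z, e⟫ = b.repr z i₀ := by
        rw [b.repr_apply_apply, hb, real_inner_comm]
      have hmem : (z + u₁ ∈ H) ↔ -(d/2) ≤ b.repr z i₀ := by
        have h1 : (z + u₁ ∈ H) ↔ fZ (z + (u₁ - u₂)) ≤ fZ z := by
          rw [hHdef]
          constructor <;> intro h
          · have := h
            simpa [add_sub_assoc, add_sub_cancel_right] using this
          · show fZ (z + u₁ - u₂) ≤ fZ (z + u₁ - u₁)
            simpa [add_sub_assoc, add_sub_cancel_right] using h
        rw [h1, hfZ, hfZ]
        have hc : (0:ℝ) < (2 * Real.pi * σ ^ 2) ^ (-(n : ℝ) / 2) := by positivity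
        rw [mul_le_mul_iff_right₀ hc, Real.exp_le_exp,
          div_le_div_iff_of_pos_right (show (0:ℝ) < 2 * σ ^ 2 by positivity), neg_le_neg_iff]
        have hexpand : ‖z + (u₁ - u₂)‖ ^ 2
            = ‖z‖ ^ 2 + 2 * (d * ⟪z, e⟫) + d ^ 2 := by
          rw [norm_add_sq_real, hew, real_inner_smul_right, norm_smul,
            Real.norm_eq_abs, abs_of_pos hdpos, hnorm_e, mul_one]
        rw [hexpand, ← hinner]
        constructor
        · intro h; nlinarith
        · intro h; nlinarith
      have hval : fZ (z + u₁ - u₁) = ∏ i, g (b.repr z i) := by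
        rw [add_sub_cancel_right, hfZ z, ← gprod hσ (b.repr z)]
        rw [show ‖(b.repr z : EuclideanSpace ℝ (Fin n))‖ = ‖z‖ from b.repr.norm_map z]
      by_cases hz : z + u₁ ∈ H
      · rw [Set.indicator_of_mem hz,
          Set.indicator_of_mem (Set.mem_Ici.mpr (hmem.mp hz)), one_mul, hval]
      · rw [Set.indicator_of_notMem hz,
          Set.indicator_of_notMem (fun h => hz (hmem.mpr (Set.mem_Ici.mp h))), zero_mul]
    simp_rw [hpt]
    have hcomp := b.measurePreserving_measurableEquiv.integral_comp'
      (fun w : EuclideanSpace ℝ (Fin n) =>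
        (Set.Ici (-(d/2))).indicator (fun _ => (1:ℝ)) (w i₀) * ∏ i, g (w i))
    rw [show (∫ z : EuclideanSpace ℝ (Fin n),
        (Set.Ici (-(d/2))).indicator (fun _ => (1:ℝ)) (b.repr z i₀) * ∏ i, g (b.repr z i))
      = ∫ w : EuclideanSpace ℝ (Fin n),
        (Set.Ici (-(d/2))).indicator (fun _ => (1:ℝ)) (w i₀) * ∏ i, g (w i) from hcomp]
    rw [halfspace_int hσ i₀ (-(d/2)), half_int hσ d]
  calc (∫ y in D, (fZ (y - u₁) - fZ (y - u₂)))
      ≤ ∫ y in H, (fZ (y - u₁) - fZ (y - u₂)) := hle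
    _ < ∫ y in H, fZ (y - u₁) := by rw [hsub]; linarith
    _ = _ := hkey
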